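/- arXiv:2005.11426 — 4 statements merged into one kernel-verified Lean document; each statement's English description precedes it below -/
import Mathlib

section
/- Fix α ∈ (0, 1), W₀ > 0, and let W_i = W₀/α^i for i ∈ ℤ. For any i ∈ ℤ, any h > 0 and any offsets x, y ∈ ℝ, the two boxes b₁ = (W_i, h, x, y) and b₂ = (W_{i+1}, h, x, y), whose widths are two adjacent width-cell centers, satisfy IoU(b₁, b₂) = α. -/
/-- Intersection area of two axis-aligned boxes given as (w, h, x, y):
the rectangle [x - w/2, x + w/2] × [y - h/2, y + h/2]. -/
noncomputable def interArea (w₁ h₁ x₁ y₁ w₂ h₂ x₂ y₂ : ℝ) : ℝ :=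
  max 0 (min (x₁ + w₁ / 2) (x₂ + w₂ / 2) - max (x₁ - w₁ / 2) (x₂ - w₂ / 2)) *
    max 0 (min (y₁ + h₁ / 2) (y₂ + h₂ / 2) - max (y₁ - h₁ / 2) (y₂ - h₂ / 2))

/-- Intersection over union of two axis-aligned boxes. -/
noncomputable def iou (w₁ h₁ x₁ y₁ w₂ h₂ x₂ y₂ : ℝ) : ℝ :=
  interArea w₁ h₁ x₁ y₁ w₂ h₂ x₂ y₂ /
    (w₁ * h₁ + w₂ * h₂ - interArea w₁ h₁ x₁ y₁ w₂ h₂ x₂ y₂)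

theorem stmt_2 (α W₀ : ℝ) (hα : α ∈ Set.Ioo (0 : ℝ) 1) (hW₀ : 0 < W₀)
    (i : ℤ) (h x y : ℝ) (hh : 0 < h) :
    iou (W₀ / α ^ i) h x y (W₀ / α ^ (i + 1)) h x y = α := by
  obtain ⟨hα0, hα1⟩ := hα
  set w₁ : ℝ := W₀ / α ^ i with hw₁
  set w₂ : ℝ := W₀ / α ^ (i + 1) with hw₂
  have hzp : (0 : ℝ) < α ^ i := zpow_pos hα0 i
  have hzp1 : (0 : ℝ) < α ^ (i + 1) := zpow_pos hα0 (i + 1)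
  have hw₁pos : 0 < w₁ := div_pos hW₀ hzp
  have hw₂pos : 0 < w₂ := div_pos hW₀ hzp1
  have hkey : w₁ = α * w₂ := by
    rw [hw₁, hw₂, zpow_add_one₀ (ne_of_gt hα0)]
    field_simp
  have hle : w₁ ≤ w₂ := by nlinarith
  have hinter : interArea w₁ h x y w₂ h x y = w₁ * h := by
    unfold interArea
    rw [min_eq_left (by linarith : x + w₁ / 2 ≤ x + w₂ / 2),
        max_eq_left (by linarith : x - w₂ / 2 ≤ x - w₁ / 2),
        min_self, max_self]
    have h1 : x + w₁ / 2 - (x - w₁ / 2) = w₁ := by ring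
    have h2 : y + h / 2 - (y - h / 2) = h := by ring
    rw [h1, h2, max_eq_right hw₁pos.le, max_eq_right hh.le]
  unfold iou
  rw [hinter]
  have : w₁ * h + w₂ * h - w₁ * h = w₂ * h := by ring
  rw [this, hkey]
  field_simp
end

section
/- Fix α ∈ (0, 1) and W > 0. Let b₁ = (w₁, h, x, y) and b₂ = (w₂, h, x, y) be two boxes with the same height h > 0 and the same offsets (x, y), whose widths satisfy √α·W ≤ w₁ ≤ W/√α and √α·W ≤ w₂ ≤ W/√α (i.e., both widths lie in the same width cell with center W). Then IoU(b₁, b₂) ≥ α, and this bound is attained when {w₁, w₂} = {√α·W, W/√α}. -/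
lemma interArea_same_center (w₁ w₂ h x y : ℝ) (hw₁ : 0 < w₁) (hw₂ : 0 < w₂) (hh : 0 < h) :
    interArea w₁ h x y w₂ h x y = min w₁ w₂ * h := by
  unfold interArea
  have h1 : min (x + w₁ / 2) (x + w₂ / 2) = x + min w₁ w₂ / 2 := by
    rcases le_total w₁ w₂ with hle | hle <;>
      simp [min_eq_left, min_eq_right, hle, div_le_div_of_nonneg_right, *] <;> linarith
  have h2 : max (x - w₁ / 2) (x - w₂ / 2) = x - min w₁ w₂ / 2 := by
    rcases le_total w₁ w₂ with hle | hle <;>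
      simp [max_eq_left, max_eq_right, min_eq_left, min_eq_right, hle, *] <;> linarith
  have h3 : min (y + h / 2) (y + h / 2) = y + h / 2 := min_self _
  have h4 : max (y - h / 2) (y - h / 2) = y - h / 2 := max_self _
  rw [h1, h2, h3, h4]
  have hm : (0:ℝ) < min w₁ w₂ := lt_min hw₁ hw₂
  have : x + min w₁ w₂ / 2 - (x - min w₁ w₂ / 2) = min w₁ w₂ := by ring
  rw [this]
  have : y + h / 2 - (y - h / 2) = h := by ring
  rw [this, max_eq_right hm.le, max_eq_right hh.le]

lemma iou_same_center (w₁ w₂ h x y : ℝ) (hw₁ : 0 < w₁) (hw₂ : 0 < w₂) (hh : 0 < h) :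
    iou w₁ h x y w₂ h x y = min w₁ w₂ / max w₁ w₂ := by
  unfold iou
  rw [interArea_same_center w₁ w₂ h x y hw₁ hw₂ hh]
  have hsum : w₁ * h + w₂ * h - min w₁ w₂ * h = max w₁ w₂ * h := by
    rcases le_total w₁ w₂ with hle | hle <;>
      simp [min_eq_left, min_eq_right, max_eq_left, max_eq_right, hle] <;> ring
  rw [hsum, mul_div_mul_right _ _ hh.ne']

theorem stmt_3 (α W : ℝ) (hα : α ∈ Set.Ioo (0 : ℝ) 1) (hW : 0 < W)
    (w₁ w₂ h x y : ℝ) (hh : 0 < h)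
    (hw₁l : Real.sqrt α * W ≤ w₁) (hw₁u : w₁ ≤ W / Real.sqrt α)
    (hw₂l : Real.sqrt α * W ≤ w₂) (hw₂u : w₂ ≤ W / Real.sqrt α) :
    α ≤ iou w₁ h x y w₂ h x y ∧
      iou (Real.sqrt α * W) h x y (W / Real.sqrt α) h x y = α := by
  obtain ⟨hα0, hα1⟩ := hα
  have hs : 0 < Real.sqrt α := Real.sqrt_pos.mpr hα0
  have hsq : Real.sqrt α * Real.sqrt α = α := Real.mul_self_sqrt hα0.le
  have hlo : 0 < Real.sqrt α * W := mul_pos hs hW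
  have hhi : 0 < W / Real.sqrt α := div_pos hW hs
  have hw₁ : 0 < w₁ := lt_of_lt_of_le hlo hw₁l
  have hw₂ : 0 < w₂ := lt_of_lt_of_le hlo hw₂l
  have key : Real.sqrt α * W = α * (W / Real.sqrt α) := by
    field_simp
    nlinarith [hsq]
  constructor
  · rw [iou_same_center w₁ w₂ h x y hw₁ hw₂ hh]
    have hmaxpos : 0 < max w₁ w₂ := lt_of_lt_of_le hw₁ (le_max_left _ _)
    rw [le_div_iff₀ hmaxpos]
    have hmin : Real.sqrt α * W ≤ min w₁ w₂ := le_min hw₁l hw₂l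
    have hmax : max w₁ w₂ ≤ W / Real.sqrt α := max_le hw₁u hw₂u
    calc α * max w₁ w₂ ≤ α * (W / Real.sqrt α) := by
          exact mul_le_mul_of_nonneg_left hmax hα0.le
      _ = Real.sqrt α * W := key.symm
      _ ≤ min w₁ w₂ := hmin
  · rw [iou_same_center _ _ h x y hlo hhi hh]
    have hle : Real.sqrt α * W ≤ W / Real.sqrt α := by
      rw [key]
      nlinarith [hhi]
    rw [min_eq_left hle, max_eq_right hle, key, mul_div_assoc, div_self hhi.ne', mul_one]
end

section
/- Fix α ∈ (0, 1) and W > 0, and set δ = W(1 − α)/(1 + α). Then (W − δ)/(W + δ) = α, and consequently any two boxes b₁ = (W, h, x₁, y) and b₂ = (W, h, x₂, y) with equal width W, equal height h > 0, equal vertical offset y, and horizontal offsets at adjacent partition centers (i.e., |x₁ − x₂| = δ) satisfy IoU(b₁, b₂) = α. -/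
lemma interArea_shift (W h x y δ : ℝ) (hh : 0 < h) (hδ0 : 0 ≤ δ) (hδW : δ ≤ W) :
    interArea W h x y W h (x + δ) y = (W - δ) * h := by
  unfold interArea
  have h1 : min (x + W / 2) (x + δ + W / 2) = x + W / 2 := by
    apply min_eq_left; linarith
  have h2 : max (x - W / 2) (x + δ - W / 2) = x + δ - W / 2 := by
    apply max_eq_right; linarith
  have h3 : min (y + h / 2) (y + h / 2) = y + h / 2 := min_self _
  have h4 : max (y - h / 2) (y - h / 2) = y - h / 2 := max_self _
  rw [h1, h2, h3, h4]
  have h5 : max 0 (x + W / 2 - (x + δ - W / 2)) = W - δ := by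
    rw [max_eq_right]; ring_nf; linarith
  have h6 : max 0 (y + h / 2 - (y - h / 2)) = h := by
    rw [max_eq_right]; ring_nf; linarith
  rw [h5, h6]

theorem stmt_4 (α W : ℝ) (hα : α ∈ Set.Ioo (0 : ℝ) 1) (hW : 0 < W) :
    (W - W * (1 - α) / (1 + α)) / (W + W * (1 - α) / (1 + α)) = α ∧
    ∀ h x₁ x₂ y : ℝ, 0 < h → |x₁ - x₂| = W * (1 - α) / (1 + α) →
      iou W h x₁ y W h x₂ y = α := by
  obtain ⟨hα0, hα1⟩ := hα
  set δ := W * (1 - α) / (1 + α) with hδ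
  have hα1' : 0 < 1 + α := by linarith
  have hδ0 : 0 ≤ δ := by
    apply div_nonneg _ (le_of_lt hα1')
    nlinarith
  have hδW : δ < W := by
    rw [hδ, div_lt_iff₀ hα1']
    nlinarith
  have key : (W - δ) / (W + δ) = α := by
    have hWδ : (0:ℝ) < W + δ := by linarith
    rw [div_eq_iff hWδ.ne', hδ]
    field_simp
    ring
  refine ⟨key, fun h x₁ x₂ y hh habs => ?_⟩
  have main : ∀ x : ℝ, iou W h x y W h (x + δ) y = α := by
    intro x
    unfold iou
    rw [interArea_shift W h x y δ hh hδ0 hδW.le]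
    have : W * h + W * h - (W - δ) * h = (W + δ) * h := by ring
    rw [this, ← key]
    rw [div_eq_div_iff (by positivity) (by positivity)]
    ring
  rcases (abs_eq hδ0).mp habs with hc | hc
  · have : x₁ = x₂ + δ := by linarith
    subst this
    have := main x₂
    unfold iou interArea at this ⊢
    rw [min_comm (x₂ + δ + W / 2), max_comm (x₂ + δ - W / 2)]
    exact this
  · have : x₂ = x₁ + δ := by linarith
    subst this
    exact main x₁
end

section
/- Let α ∈ (0, 1) satisfy (1 − α)/(1 + α) < √α, and fix IoUHash parameters W₀ > 0, H₀ > 0, b_x, b_y ∈ ℝ. If two axis-aligned boxes b₁ = (w₁, h₁, x₁, y₁) and b₂ = (w₂, h₂, x₂, y₂) are hashed by IoUHash to the same code (i, j, m, n) ∈ ℤ⁴, then their intersection area is strictly positive, and hence IoU(b₁, b₂) > 0. -/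
/-- The width (or height) cell index: i = ⌊(log W₀ − log w)/log α⌉,
where ⌊·⌉ is nearest-integer rounding with ⌊t⌉ = k iff k − 1/2 ≤ t < k + 1/2,
which is Mathlib's `round`. -/
noncomputable def widthIdx (α W₀ w : ℝ) : ℤ :=
  round ((Real.log W₀ - Real.log w) / Real.log α)

/-- The i-th cell center W_i = W₀ / α^i. -/
noncomputable def cellCenter (α W₀ : ℝ) (i : ℤ) : ℝ := W₀ / α ^ i

/-- The offset partition spacing δ_i = W_i (1 − α)/(1 + α). -/
noncomputable def cellDelta (α W₀ : ℝ) (i : ℤ) : ℝ :=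
  cellCenter α W₀ i * ((1 - α) / (1 + α))

/-- The offset cell index: m = ⌊x/δ_i − b_x⌉ where i is the width cell index of w. -/
noncomputable def offsetIdx (α W₀ bX w x : ℝ) : ℤ :=
  round (x / cellDelta α W₀ (widthIdx α W₀ w) - bX)

/-- IoUHash: maps a box (w, h, x, y) to the code (i, j, m, n) ∈ ℤ⁴. -/
noncomputable def iouHash (α W₀ H₀ bX bY w h x y : ℝ) : ℤ × ℤ × ℤ × ℤ :=
  (widthIdx α W₀ w, widthIdx α H₀ h, offsetIdx α W₀ bX w x, offsetIdx α H₀ bY h y)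


lemma cellCenter_pos (α W₀ : ℝ) (hα : 0 < α) (hW₀ : 0 < W₀) (i : ℤ) :
    0 < cellCenter α W₀ i :=
  div_pos hW₀ (zpow_pos hα i)

lemma cellDelta_pos (α W₀ : ℝ) (hα : 0 < α) (hα1 : α < 1) (hW₀ : 0 < W₀) (i : ℤ) :
    0 < cellDelta α W₀ i := by
  apply mul_pos (cellCenter_pos α W₀ hα hW₀ i)
  apply div_pos <;> linarith

lemma cellDelta_lt (α W₀ : ℝ) (hα : 0 < α) (hα1 : α < 1)
    (hcond : (1 - α) / (1 + α) < Real.sqrt α) (hW₀ : 0 < W₀) (w : ℝ) (hw : 0 < w) :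
    cellDelta α W₀ (widthIdx α W₀ w) < w := by
  set t := (Real.log W₀ - Real.log w) / Real.log α with ht
  set i := widthIdx α W₀ w with hi
  have hround : |t - (i : ℝ)| ≤ 1 / 2 := abs_sub_round t
  have hlogα : Real.log α < 0 := Real.log_neg hα hα1
  have hlogα' : Real.log α ≠ 0 := ne_of_lt hlogα
  have htl : t * Real.log α = Real.log W₀ - Real.log w := div_mul_cancel₀ _ hlogα'
  have hti : (i : ℝ) - 1 / 2 ≤ t := by
    have := abs_le.mp hround
    linarith [this.2, this.1]
  -- log w ≥ log W₀ - (i - 1/2) * log α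
  have hlw : Real.log W₀ - ((i : ℝ) - 1 / 2) * Real.log α ≤ Real.log w := by
    nlinarith [mul_le_mul_of_nonpos_right hti (le_of_lt hlogα)]
  have hWi : 0 < cellCenter α W₀ i := cellCenter_pos α W₀ hα hW₀ i
  have hsqrt : 0 < Real.sqrt α := Real.sqrt_pos.mpr hα
  have hlogcell : Real.log (cellCenter α W₀ i * Real.sqrt α) ≤ Real.log w := by
    rw [Real.log_mul (ne_of_gt hWi) (ne_of_gt hsqrt), cellCenter,
      Real.log_div (ne_of_gt hW₀) (ne_of_gt (zpow_pos hα i)),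
      Real.log_zpow, Real.log_sqrt hα.le]
    push_cast
    linarith
  have hge : cellCenter α W₀ i * Real.sqrt α ≤ w :=
    (Real.log_le_log_iff (by positivity) hw).mp hlogcell
  calc cellDelta α W₀ i = cellCenter α W₀ i * ((1 - α) / (1 + α)) := rfl
    _ < cellCenter α W₀ i * Real.sqrt α := by
        exact mul_lt_mul_of_pos_left hcond hWi
    _ ≤ w := hge

lemma offset_close (α W₀ bX : ℝ) (hα : 0 < α) (hα1 : α < 1) (hW₀ : 0 < W₀)
    (w₁ x₁ w₂ x₂ : ℝ)
    (hidx : widthIdx α W₀ w₁ = widthIdx α W₀ w₂)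
    (hoff : offsetIdx α W₀ bX w₁ x₁ = offsetIdx α W₀ bX w₂ x₂) :
    |x₁ - x₂| ≤ cellDelta α W₀ (widthIdx α W₀ w₁) := by
  set i := widthIdx α W₀ w₁ with hi
  set δ := cellDelta α W₀ i with hδ
  have hδpos : 0 < δ := cellDelta_pos α W₀ hα hα1 hW₀ i
  have h1 : |x₁ / δ - bX - (offsetIdx α W₀ bX w₁ x₁ : ℝ)| ≤ 1 / 2 := abs_sub_round _
  have h2 : |x₂ / δ - bX - (offsetIdx α W₀ bX w₂ x₂ : ℝ)| ≤ 1 / 2 := by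
    rw [offsetIdx, ← hidx]
    exact abs_sub_round _
  rw [hoff] at h1
  have h3 : |x₁ / δ - x₂ / δ| ≤ 1 := by
    have := abs_sub_abs_le_abs_sub (x₁ / δ - bX - (offsetIdx α W₀ bX w₂ x₂ : ℝ))
      (x₂ / δ - bX - (offsetIdx α W₀ bX w₂ x₂ : ℝ))
    have h4 := abs_le.mp h1
    have h5 := abs_le.mp h2
    rw [abs_le]
    constructor <;> nlinarith [h4.1, h4.2, h5.1, h5.2]
  have : |x₁ - x₂| / δ ≤ 1 := by
    rwa [← sub_div, abs_div, abs_of_pos hδpos] at h3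
  calc |x₁ - x₂| = |x₁ - x₂| / δ * δ := by field_simp
    _ ≤ 1 * δ := mul_le_mul_of_nonneg_right this hδpos.le
    _ = δ := one_mul δ

theorem stmt_6 (α W₀ H₀ bX bY : ℝ) (hα : α ∈ Set.Ioo (0 : ℝ) 1)
    (hcond : (1 - α) / (1 + α) < Real.sqrt α) (hW₀ : 0 < W₀) (hH₀ : 0 < H₀)
    (w₁ h₁ x₁ y₁ w₂ h₂ x₂ y₂ : ℝ)
    (hw₁ : 0 < w₁) (hh₁ : 0 < h₁) (hw₂ : 0 < w₂) (hh₂ : 0 < h₂)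
    (hhash : iouHash α W₀ H₀ bX bY w₁ h₁ x₁ y₁ = iouHash α W₀ H₀ bX bY w₂ h₂ x₂ y₂) :
    0 < interArea w₁ h₁ x₁ y₁ w₂ h₂ x₂ y₂ ∧
      0 < iou w₁ h₁ x₁ y₁ w₂ h₂ x₂ y₂ := by
  obtain ⟨hα0, hα1⟩ := hα
  simp only [iouHash, Prod.mk.injEq] at hhash
  obtain ⟨hiw, hih, hmx, hmy⟩ := hhash
  have hdx : |x₁ - x₂| ≤ cellDelta α W₀ (widthIdx α W₀ w₁) :=
    offset_close α W₀ bX hα0 hα1 hW₀ w₁ x₁ w₂ x₂ hiw hmx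
  have hdy : |y₁ - y₂| ≤ cellDelta α H₀ (widthIdx α H₀ h₁) :=
    offset_close α H₀ bY hα0 hα1 hH₀ h₁ y₁ h₂ y₂ hih hmy
  have hδw1 : cellDelta α W₀ (widthIdx α W₀ w₁) < w₁ :=
    cellDelta_lt α W₀ hα0 hα1 hcond hW₀ w₁ hw₁
  have hδw2 : cellDelta α W₀ (widthIdx α W₀ w₁) < w₂ := by
    rw [hiw]; exact cellDelta_lt α W₀ hα0 hα1 hcond hW₀ w₂ hw₂
  have hδh1 : cellDelta α H₀ (widthIdx α H₀ h₁) < h₁ :=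
    cellDelta_lt α H₀ hα0 hα1 hcond hH₀ h₁ hh₁
  have hδh2 : cellDelta α H₀ (widthIdx α H₀ h₁) < h₂ := by
    rw [hih]; exact cellDelta_lt α H₀ hα0 hα1 hcond hH₀ h₂ hh₂
  obtain ⟨hdx1, hdx2⟩ := abs_le.mp hdx
  obtain ⟨hdy1, hdy2⟩ := abs_le.mp hdy
  have hX : 0 < min (x₁ + w₁ / 2) (x₂ + w₂ / 2) - max (x₁ - w₁ / 2) (x₂ - w₂ / 2) := by
    rw [sub_pos]
    exact max_lt (lt_min (by linarith) (by linarith)) (lt_min (by linarith) (by linarith))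
  have hY : 0 < min (y₁ + h₁ / 2) (y₂ + h₂ / 2) - max (y₁ - h₁ / 2) (y₂ - h₂ / 2) := by
    rw [sub_pos]
    exact max_lt (lt_min (by linarith) (by linarith)) (lt_min (by linarith) (by linarith))
  have hI : 0 < interArea w₁ h₁ x₁ y₁ w₂ h₂ x₂ y₂ := by
    rw [interArea, max_eq_right hX.le, max_eq_right hY.le]
    exact mul_pos hX hY
  refine ⟨hI, ?_⟩
  have hXle : min (x₁ + w₁ / 2) (x₂ + w₂ / 2) - max (x₁ - w₁ / 2) (x₂ - w₂ / 2) ≤ w₁ := by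
    have := min_le_left (x₁ + w₁ / 2) (x₂ + w₂ / 2)
    have := le_max_left (x₁ - w₁ / 2) (x₂ - w₂ / 2)
    linarith
  have hYle : min (y₁ + h₁ / 2) (y₂ + h₂ / 2) - max (y₁ - h₁ / 2) (y₂ - h₂ / 2) ≤ h₁ := by
    have := min_le_left (y₁ + h₁ / 2) (y₂ + h₂ / 2)
    have := le_max_left (y₁ - h₁ / 2) (y₂ - h₂ / 2)
    linarith
  have hIle : interArea w₁ h₁ x₁ y₁ w₂ h₂ x₂ y₂ ≤ w₁ * h₁ := by
    rw [interArea, max_eq_right hX.le, max_eq_right hY.le]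
    exact mul_le_mul hXle hYle hY.le hw₁.le
  rw [iou]
  apply div_pos hI
  nlinarith [mul_pos hw₂ hh₂]
end
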